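/- Fix an integer k ≥ 1 and integers m_1, …, m_k ≥ 1. The polynomial R_{(m_1,…,m_k)}(t) has a real root μ > 1 such that every complex root z of R_{(m_1,…,m_k)} satisfies |z| ≤ μ. In particular λ(R_{(m_1,…,m_k)}) > 1. -/

import Mathlib

open Polynomial

/-- The polynomials `R_{(m_1, …, m_i)}` of Kin–Takasawa (the sequence `m` is indexed
starting from `1`; the value at `0` is a dummy): `R_{(m_1)}(t) = t^{m_1+1}(t-1) - 2t`
and `R_{(m_1,…,m_i)}(t) = t^{m_i}(t-1) R_{(m_1,…,m_{i-1})}(t)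
+ (-1)^i 2t (R_{(m_1,…,m_{i-1})})_*(t)` for `i ≥ 2`, where `f_*` is the reciprocal
polynomial `t^(deg f) f(1/t)`, i.e. `Polynomial.reverse`. -/
noncomputable def Rpoly (m : ℕ → ℕ) : ℕ → Polynomial ℤ
  | 0 => 1
  | 1 => X ^ (m 1 + 1) * (X - 1) - 2 * X
  | (i + 2) => X ^ (m (i + 2)) * (X - 1) * Rpoly m (i + 1)
      + (-1 : Polynomial ℤ) ^ (i + 2) * (2 * X) * (Rpoly m (i + 1)).reverse

/-- The polynomial `P_{(m_1, …, m_{k+1})}(t) = t^{m_{k+1}} R_{(m_1,…,m_k)}(t)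
+ (-1)^{k+1} (R_{(m_1,…,m_k)})_*(t)`, whose largest root is the dilatation of the
pseudo-Anosov braid `β_{(m_1,…,m_{k+1})}`. -/
noncomputable def Ppoly (m : ℕ → ℕ) (k : ℕ) : Polynomial ℤ :=
  X ^ (m (k + 1)) * Rpoly m k + (-1 : Polynomial ℤ) ^ (k + 1) * (Rpoly m k).reverse

/-- For an integer polynomial `f`, the maximal absolute value of its complex roots. -/
noncomputable def maxRootAbs (f : Polynomial ℤ) : ℝ :=
  sSup ((fun z : ℂ => ‖z‖) '' {z : ℂ | Polynomial.aeval z f = 0})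

noncomputable def Complex.abs : AbsoluteValue ℂ ℝ := NormedField.toAbsoluteValue ℂ

lemma Complex.abs_apply (z : ℂ) : Complex.abs z = ‖z‖ := rfl

lemma Complex.abs_ofReal (r : ℝ) : Complex.abs (r : ℂ) = |r| := by
  rw [Complex.abs_apply, Complex.norm_real, Real.norm_eq_abs]

lemma Complex.abs_two : Complex.abs (2 : ℂ) = 2 := by
  rw [Complex.abs_apply]; norm_num

namespace KTaux

/-- companion sequence: `Rpoly m i = X * Qp m i` for `i ≥ 1`. -/
noncomputable def Qp (m : ℕ → ℕ) : ℕ → Polynomial ℤ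
  | 0 => 1
  | (i+1) => X ^ (m (i+1)) * (X - 1) * Qp m i
      + (-1 : Polynomial ℤ) ^ (i+1) * 2 * (Qp m i).reverse

noncomputable def ep (m : ℕ → ℕ) : ℕ → ℕ
  | 0 => 0
  | (i+1) => ep m i + m (i+1) + 1

lemma reflect_reflect {R : Type*} [Semiring R] (N : ℕ) (f : R[X]) :
    reflect N (reflect N f) = f := by
  ext i
  simp [coeff_reflect, revAt_invol]

lemma neg_one_pow_two_C (i : ℕ) :
    ((-1 : ℤ[X]) ^ i * 2) = C ((-1 : ℤ) ^ i * 2) := by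
  simp only [C_mul, C_pow]
  norm_num

lemma Qp_struct (m : ℕ → ℕ) (i : ℕ) :
    (Qp m i).Monic ∧ (Qp m i).natDegree = ep m i ∧
      0 < (-1 : ℤ) ^ i * (Qp m i).coeff 0 := by
  induction i with
  | zero => simp [Qp, ep, monic_one]
  | succ i ih =>
    obtain ⟨hmon, hdeg, hc0⟩ := ih
    set M := m (i+1) with hM
    set q := Qp m i with hq
    have hqne : q ≠ 0 := hmon.ne_zero
    have h1 : (X ^ M * (X - 1) : ℤ[X]).Monic := by
      simpa using (monic_X_pow M).mul (monic_X_sub_C (1 : ℤ))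
    have h1deg : (X ^ M * (X - 1) : ℤ[X]).natDegree = M + 1 := by
      rw [(monic_X_pow M).natDegree_mul (by simpa using monic_X_sub_C (1 : ℤ))]
      simp [natDegree_X_pow]
      simpa using natDegree_X_sub_C (1 : ℤ)
    have hAmon : (X ^ M * (X - 1) * q).Monic := h1.mul hmon
    have hAdeg : (X ^ M * (X - 1) * q).natDegree = M + 1 + ep m i := by
      rw [h1.natDegree_mul hmon, hdeg, h1deg]
    have h2 : ((-1 : ℤ[X]) ^ (i+1) * 2 * q.reverse).natDegree ≤ ep m i := by
      calc ((-1 : ℤ[X]) ^ (i+1) * 2 * q.reverse).natDegree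
          ≤ ((-1 : ℤ[X]) ^ (i+1) * 2).natDegree + q.reverse.natDegree :=
            natDegree_mul_le
        _ ≤ 0 + q.natDegree := by
            refine add_le_add ?_ (reverse_natDegree_le q)
            rw [neg_one_pow_two_C, natDegree_C]
        _ = ep m i := by rw [hdeg]; ring
    have hBdeg : ((-1 : ℤ[X]) ^ (i+1) * 2 * q.reverse).degree <
        (X ^ M * (X - 1) * q).degree := by
      rw [degree_eq_natDegree hAmon.ne_zero, hAdeg]
      refine lt_of_le_of_lt degree_le_natDegree ?_
      exact_mod_cast h2.trans_lt (by omega)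
    refine ⟨?_, ?_, ?_⟩
    · rw [Qp, ← hq, ← hM]
      exact hAmon.add_of_left hBdeg
    · rw [Qp, ← hq, ← hM, natDegree_add_eq_left_of_degree_lt hBdeg, hAdeg, ep]
      ring
    · rw [Qp, ← hq, ← hM]
      have hrev0 : q.reverse.coeff 0 = 1 := by
        rw [coeff_zero_reverse]; exact hmon
      have hA0 : (X ^ M * (X - 1) * q).coeff 0
          = (if 0 = M then 1 else 0) * (-1) * q.coeff 0 := by
        rw [mul_coeff_zero, mul_coeff_zero, coeff_X_pow]
        simp
      rw [coeff_add, hA0, neg_one_pow_two_C, coeff_C_mul, hrev0]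
      obtain hs | hs : (-1:ℤ)^i = 1 ∨ (-1:ℤ)^i = -1 :=
        i.even_or_odd.imp (fun h => h.neg_one_pow) (fun h => h.neg_one_pow)
      all_goals
        rw [hs] at hc0
        rw [pow_succ, hs]
        split_ifs <;> nlinarith [hc0]

end KTaux

namespace KTaux2
open KTaux

variable (m : ℕ → ℕ)

lemma Qp_coeff0_ne (i : ℕ) : (Qp m i).coeff 0 ≠ 0 := by
  have h := (Qp_struct m i).2.2
  intro h0
  rw [h0, mul_zero] at h
  exact lt_irrefl 0 h

lemma Qp_reverse_natDegree (i : ℕ) : (Qp m i).reverse.natDegree = ep m i := by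
  rw [reverse_natDegree, (Qp_struct m i).2.1]
  have : (Qp m i).natTrailingDegree = 0 :=
    natTrailingDegree_eq_zero.mpr (Or.inr (Qp_coeff0_ne m i))
  rw [this]
  omega

lemma Qp_reverse_eq_reflect (i : ℕ) : (Qp m i).reverse = reflect (ep m i) (Qp m i) := by
  rw [Polynomial.reverse, (Qp_struct m i).2.1]

/-- Key recursion for the reverse polynomials. -/
lemma reverse_Qp_succ (i : ℕ) :
    (Qp m (i+1)).reverse = (1 - X) * (Qp m i).reverse
      + (-1 : ℤ[X]) ^ (i+1) * 2 * X ^ (m (i+1) + 1) * Qp m i := by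
  set M := m (i+1) with hM
  set q := Qp m i with hq
  have hdeg : q.natDegree = ep m i := (Qp_struct m i).2.1
  have h1deg : (X ^ M * (X - 1) : ℤ[X]).natDegree = M + 1 := by
    rw [(monic_X_pow M).natDegree_mul (by simpa using monic_X_sub_C (1 : ℤ))]
    simp [natDegree_X_pow]
    simpa using natDegree_X_sub_C (1 : ℤ)
  have hstep : (Qp m (i+1)).natDegree = ep m (i+1) := (Qp_struct m (i+1)).2.1
  rw [Polynomial.reverse, hstep]
  show reflect (ep m (i+1)) (X ^ M * (X - 1) * q + (-1 : ℤ[X]) ^ (i+1) * 2 * q.reverse) = _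
  rw [reflect_add]
  have hepp : ep m (i+1) = (M + 1) + ep m i := by rw [ep]; ring
  have hA : reflect (ep m (i+1)) (X ^ M * (X - 1) * q)
      = (1 - X) * q.reverse := by
    rw [hepp, reflect_mul _ _ h1deg.le hdeg.le]
    congr 1
    · have : (X ^ M * (X - 1) : ℤ[X]) = X ^ (M+1) - X ^ M := by ring
      rw [this, reflect_sub, reflect_monomial, reflect_monomial,
        revAt_le (le_refl (M+1)), revAt_le (Nat.le_succ M)]
      simp
    · rw [← hdeg, Polynomial.reverse]
  have hB : reflect (ep m (i+1)) ((-1 : ℤ[X]) ^ (i+1) * 2 * q.reverse)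
      = (-1 : ℤ[X]) ^ (i+1) * 2 * (X ^ (M + 1) * q) := by
    rw [neg_one_pow_two_C, reflect_C_mul]
    congr 1
    have hrevdeg : q.reverse.natDegree = ep m i := Qp_reverse_natDegree m i
    have : ep m (i+1) = ep m i + (M + 1) := by rw [ep]; ring
    rw [this, ← mul_one q.reverse,
      reflect_mul _ _ hrevdeg.le (by simp : (1 : ℤ[X]).natDegree ≤ M + 1)]
    rw [Qp_reverse_eq_reflect, KTaux.reflect_reflect, reflect_one, mul_comm]
  rw [hA, hB]
  ring

/-- The central identity. -/
lemma central (i : ℕ) :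
    (1 - X) * (Qp m (i+1)).reverse
      = (-1 : ℤ[X]) ^ i * 2 * X * Qp m (i+1) + (X + 1) ^ 2 * (Qp m i).reverse := by
  rw [reverse_Qp_succ]
  show (1 - X) * ((1 - X) * (Qp m i).reverse
      + (-1 : ℤ[X]) ^ (i+1) * 2 * X ^ (m (i+1) + 1) * Qp m i)
    = (-1 : ℤ[X]) ^ i * 2 * X * (X ^ (m (i+1)) * (X - 1) * Qp m i
      + (-1 : ℤ[X]) ^ (i+1) * 2 * (Qp m i).reverse) + (X + 1) ^ 2 * (Qp m i).reverse
  rw [pow_succ, pow_succ]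
  have h2 : (-1 : ℤ[X]) ^ (i * 2) = 1 := by
    rw [mul_comm, pow_mul, neg_one_sq, one_pow]
  ring_nf
  linear_combination (4 * (X : ℤ[X]) * (Qp m i).reverse) * h2

end KTaux2

namespace KTanal
open KTaux KTaux2 Filter Set

variable (m : ℕ → ℕ)

lemma aeval_ofReal (f : ℤ[X]) (r : ℝ) :
    Polynomial.aeval (r : ℂ) f = ((Polynomial.aeval r f : ℝ) : ℂ) := by
  simpa using aeval_algHom_apply (Complex.ofRealAm.restrictScalars ℤ) r f

lemma aeval_Qp_succ {A : Type*} [CommRing A] [Algebra ℤ A] (i : ℕ) (x : A) :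
    Polynomial.aeval x (Qp m (i+1))
      = x ^ (m (i+1)) * (x - 1) * Polynomial.aeval x (Qp m i)
        + (-1 : A) ^ (i+1) * 2 * Polynomial.aeval x (Qp m i).reverse := by
  rw [Qp]
  simp [map_add, map_mul, map_pow, map_sub, map_ofNat]

lemma aeval_central {A : Type*} [CommRing A] [Algebra ℤ A] (i : ℕ) (x : A) :
    (1 - x) * Polynomial.aeval x (Qp m (i+1)).reverse
      = (-1 : A) ^ i * 2 * x * Polynomial.aeval x (Qp m (i+1))
        + (x + 1) ^ 2 * Polynomial.aeval x (Qp m i).reverse := by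
  have h := congrArg (Polynomial.aeval x) (central m i)
  simpa [map_add, map_mul, map_pow, map_sub, map_ofNat] using h

lemma abs_le_sub (a b : ℂ) : Complex.abs a - Complex.abs b ≤ Complex.abs (a - b) :=
  Complex.abs.le_sub a b

set_option maxHeartbeats 1000000 in
/-- The main induction. -/
lemma inv (i : ℕ) : ∃ μ : ℝ, 1 ≤ μ ∧ (i = 0 → μ = 1) ∧
    (i ≠ 0 → 1 < μ ∧ Polynomial.aeval μ (Qp m i) = 0) ∧
    (∀ r : ℝ, μ < r → 0 < Polynomial.aeval r (Qp m i)) ∧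
    (∀ z : ℂ, μ < Complex.abs z → Polynomial.aeval z (Qp m i) ≠ 0) ∧
    (∀ z : ℂ, μ < Complex.abs z →
      Complex.abs (Polynomial.aeval z (Qp m i).reverse)
          * Polynomial.aeval (Complex.abs z) (Qp m i)
        ≤ (-1:ℝ)^i * Polynomial.aeval (Complex.abs z) (Qp m i).reverse
            * Complex.abs (Polynomial.aeval z (Qp m i))) := by
  induction i with
  | zero =>
    refine ⟨1, le_rfl, fun _ => rfl, fun h => absurd rfl h, ?_, ?_, ?_⟩ <;>
      · intro x hx
        have h1 : (1 : ℤ[X]).reverse = 1 := by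
          rw [← Polynomial.C_1, Polynomial.reverse_C]
        simp [Qp, h1]
  | succ i ih =>
    obtain ⟨μ, hμ1, hμbase, hroot, hpos, hdom, hpsi⟩ := ih
    set M := m (i+1) with hM
    -- continuity of the real evaluation maps
    have hcont : ∀ g : Polynomial ℤ, Continuous fun r : ℝ => Polynomial.aeval r g :=
      fun g => g.continuous_aeval
    -- the sign fact : (-1)^i * (reverse eval at real points) is nonnegative
    have hsign : ∀ r : ℝ, μ < r →
        |Polynomial.aeval r (Qp m i).reverse|
          ≤ (-1:ℝ)^i * Polynomial.aeval r (Qp m i).reverse := by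
      intro r hr
      have hr0 : 0 < r := lt_of_lt_of_le one_pos (hμ1.trans hr.le)
      have h := hpsi (r : ℂ) (by rwa [Complex.abs_ofReal, abs_of_pos hr0])
      rw [Complex.abs_ofReal, abs_of_pos hr0, aeval_ofReal, aeval_ofReal,
        Complex.abs_ofReal, Complex.abs_ofReal] at h
      have hq : 0 < Polynomial.aeval r (Qp m i) := hpos r hr
      rw [abs_of_pos hq] at h
      exact le_of_mul_le_mul_right (by linarith [h]) hq
    -- eventual positivity at infinity
    have htop : Tendsto (fun r : ℝ => Polynomial.aeval r (Qp m (i+1))) atTop atTop := by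
      have hmon1 : (Qp m (i+1)).Monic := (Qp_struct m (i+1)).1
      have hP : ((Qp m (i+1)).map (algebraMap ℤ ℝ)).Monic := hmon1.map _
      have hfun : ∀ r : ℝ, Polynomial.eval r ((Qp m (i+1)).map (algebraMap ℤ ℝ))
          = Polynomial.aeval r (Qp m (i+1)) := fun r => by
        rw [Polynomial.eval_map, Polynomial.aeval_def]
      have hndeg : 0 < ((Qp m (i+1)).map (algebraMap ℤ ℝ)).natDegree := by
        rw [hmon1.natDegree_map, (Qp_struct m (i+1)).2.1, ep]
        omega
      have hdeg : 0 < ((Qp m (i+1)).map (algebraMap ℤ ℝ)).degree :=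
        Polynomial.natDegree_pos_iff_degree_pos.mp hndeg
      have := Polynomial.tendsto_atTop_of_leadingCoeff_nonneg _ hdeg
        (by rw [hP.leadingCoeff]; norm_num)
      exact this.congr hfun
    obtain ⟨B, hBs⟩ : ∃ B : ℝ, ∀ r ≥ B, 1 ≤ Polynomial.aeval r (Qp m (i+1)) :=
      eventually_atTop.mp (htop.eventually_ge_atTop 1)
    set S : Set ℝ := {r : ℝ | μ < r ∧ Polynomial.aeval r (Qp m (i+1)) ≤ 0} with hSdef
    have hbdd : BddAbove S := by
      refine ⟨B, fun r hr => ?_⟩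
      by_contra hc
      push_neg at hc
      exact absurd (hBs r hc.le) (by linarith [hr.2])
    have key : ∃ μ' : ℝ, μ ≤ μ' ∧ 1 < μ' ∧ Polynomial.aeval μ' (Qp m (i+1)) = 0 ∧
        (∀ r : ℝ, μ' < r → 0 < Polynomial.aeval r (Qp m (i+1))) := by
      by_cases hSne : S.Nonempty
      · set μ' := sSup S with hμ'
        obtain ⟨s, hsS⟩ := hSne
        have hsμ' : s ≤ μ' := le_csSup hbdd hsS
        have hμμ' : μ < μ' := lt_of_lt_of_le hsS.1 hsμ'
        have hposS : ∀ r : ℝ, μ' < r → 0 < Polynomial.aeval r (Qp m (i+1)) := by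
          intro r hr
          by_contra hc
          push_neg at hc
          exact absurd (le_csSup hbdd ⟨hμμ'.trans hr, hc⟩) (not_le.mpr hr)
        have hlub : IsLUB S μ' := isLUB_csSup ⟨s, hsS⟩ hbdd
        have hle0 : Polynomial.aeval μ' (Qp m (i+1)) ≤ 0 := by
          have hcl : IsClosed {x : ℝ | Polynomial.aeval x (Qp m (i+1)) ≤ 0} :=
            isClosed_le (hcont _) continuous_const
          have hsub : S ⊆ {x : ℝ | Polynomial.aeval x (Qp m (i+1)) ≤ 0} := fun x hx => hx.2
          exact hcl.closure_subset ((closure_mono hsub) (hlub.mem_closure ⟨s, hsS⟩))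
        have hge0 : 0 ≤ Polynomial.aeval μ' (Qp m (i+1)) := by
          have htt : Tendsto (fun r : ℝ => Polynomial.aeval r (Qp m (i+1)))
              (nhdsWithin μ' (Set.Ioi μ'))
              (nhds (Polynomial.aeval μ' (Qp m (i+1)))) :=
            ((hcont _).tendsto μ').mono_left nhdsWithin_le_nhds
          exact ge_of_tendsto htt
            (eventually_nhdsWithin_of_forall (fun x hx => (hposS x hx).le))
        exact ⟨μ', hμμ'.le, lt_of_le_of_lt hμ1 hμμ', le_antisymm hle0 hge0, hposS⟩
      · have hposS : ∀ r : ℝ, μ < r → 0 < Polynomial.aeval r (Qp m (i+1)) := by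
          intro r hr
          by_contra hc
          push_neg at hc
          exact hSne ⟨r, hr, hc⟩
        rcases Nat.eq_zero_or_pos i with hi0 | hipos
        · exfalso
          subst hi0
          have hμeq : μ = 1 := hμbase rfl
          have hval : Polynomial.aeval (1:ℝ) (Qp m 1) = -2 := by
            rw [aeval_Qp_succ]
            have h1 : (Qp m 0 : ℤ[X]) = 1 := rfl
            have h2 : (1 : ℤ[X]).reverse = 1 := by
              rw [← Polynomial.C_1, Polynomial.reverse_C]
            rw [h1, h2]
            norm_num
          have htt : Tendsto (fun r : ℝ => Polynomial.aeval r (Qp m 1))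
              (nhdsWithin 1 (Set.Ioi 1)) (nhds (-2 : ℝ)) := by
            rw [← hval]
            exact ((hcont _).tendsto 1).mono_left nhdsWithin_le_nhds
          have hev : ∀ᶠ r in nhdsWithin (1:ℝ) (Set.Ioi 1),
              Polynomial.aeval r (Qp m 1) < 0 :=
            htt (Iio_mem_nhds (by norm_num : (-2:ℝ) < 0))
          obtain ⟨r, hrneg, hrIoi⟩ := (hev.and eventually_mem_nhdsWithin).exists
          exact hSne ⟨r, by rw [hμeq]; exact hrIoi, hrneg.le⟩
        · obtain ⟨hμgt1, hμroot⟩ := hroot (by omega)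
          have hrev0 : Polynomial.aeval μ (Qp m i).reverse = 0 := by
            have hub : ∀ r : ℝ, μ < r →
                2 * |Polynomial.aeval r (Qp m i).reverse|
                  ≤ r ^ M * (r - 1) * Polynomial.aeval r (Qp m i) := by
              intro r hr
              have h1 := hposS r hr
              rw [aeval_Qp_succ] at h1
              have h2 := hsign r hr
              have hσ : ((-1:ℝ)^(i+1)) = -((-1:ℝ)^i) := by rw [pow_succ]; ring
              rw [hσ] at h1
              nlinarith [h2, h1, abs_nonneg (Polynomial.aeval r (Qp m i).reverse)]
            have ht1 : Tendsto (fun r : ℝ => 2 * |Polynomial.aeval r (Qp m i).reverse|)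
                (nhdsWithin μ (Set.Ioi μ))
                (nhds (2 * |Polynomial.aeval μ (Qp m i).reverse|)) := by
              have hc : Continuous fun r : ℝ =>
                  2 * |Polynomial.aeval r (Qp m i).reverse| :=
                continuous_const.mul (hcont _).abs
              exact (hc.tendsto μ).mono_left nhdsWithin_le_nhds
            have ht2 : Tendsto (fun r : ℝ => r ^ M * (r - 1) * Polynomial.aeval r (Qp m i))
                (nhdsWithin μ (Set.Ioi μ)) (nhds 0) := by
              have hc : Continuous fun r : ℝ =>
                  r ^ M * (r - 1) * Polynomial.aeval r (Qp m i) :=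
                ((continuous_pow M).mul (continuous_id.sub continuous_const)).mul (hcont _)
              have h0 : μ ^ M * (μ - 1) * Polynomial.aeval μ (Qp m i) = 0 := by
                rw [hμroot]; ring
              rw [← h0]
              exact (hc.tendsto μ).mono_left nhdsWithin_le_nhds
            have hle := le_of_tendsto_of_tendsto ht1 ht2
              (eventually_nhdsWithin_of_forall (fun x hx => hub x hx))
            have habs : |Polynomial.aeval μ (Qp m i).reverse| = 0 := by
              have := abs_nonneg (Polynomial.aeval μ (Qp m i).reverse)
              linarith
            exact abs_eq_zero.mp habs
          have hroot1 : Polynomial.aeval μ (Qp m (i+1)) = 0 := by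
            rw [aeval_Qp_succ, hμroot, hrev0]
            ring
          exact ⟨μ, le_rfl, hμgt1, hroot1, hposS⟩
    obtain ⟨μ', hμμ', hμ'1, hroot', hpos'⟩ := key
    refine ⟨μ', hμ'1.le, fun h => absurd h (Nat.succ_ne_zero i), fun _ => ⟨hμ'1, hroot'⟩,
      hpos', ?_, ?_⟩
    · -- dominance
      intro z hz hu
      set r := Complex.abs z with hrdef
      have hr1 : 1 < r := lt_trans hμ'1 hz
      have hr0 : (0:ℝ) < r := lt_trans one_pos hr1
      have hrμ : μ < r := lt_of_le_of_lt hμμ' hz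
      have hvne : Polynomial.aeval z (Qp m i) ≠ 0 := hdom z hrμ
      have hapos : 0 < Complex.abs (Polynomial.aeval z (Qp m i)) := Complex.abs.pos hvne
      have hvr : 0 < Polynomial.aeval r (Qp m i) := hpos r hrμ
      have hEu := aeval_Qp_succ m i z
      rw [hu, ← hM] at hEu
      have heq : z ^ M * (z - 1) * Polynomial.aeval z (Qp m i)
          = -((-1:ℂ)^(i+1) * 2 * Polynomial.aeval z (Qp m i).reverse) :=
        eq_neg_of_add_eq_zero_left hEu.symm
      have habs : r ^ M * Complex.abs (z - 1) * Complex.abs (Polynomial.aeval z (Qp m i))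
          = 2 * Complex.abs (Polynomial.aeval z (Qp m i).reverse) := by
        have h2 := congrArg Complex.abs heq
        rw [Complex.abs.map_neg] at h2
        simp only [map_mul, map_pow, Complex.abs.map_neg, map_one, Complex.abs_two,
          one_pow, one_mul] at h2
        rwa [← hrdef] at h2
      have hpsiz := hpsi z hrμ
      have hur := hpos' r hz
      rw [aeval_Qp_succ, pow_succ] at hur
      have hzsub : r - 1 ≤ Complex.abs (z - 1) := by
        have := abs_le_sub z 1
        rwa [map_one, ← hrdef] at this
      -- chain of inequalities
      have c1 : r ^ M * Complex.abs (z - 1) * Complex.abs (Polynomial.aeval z (Qp m i))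
            * Polynomial.aeval r (Qp m i)
          = 2 * Complex.abs (Polynomial.aeval z (Qp m i).reverse)
            * Polynomial.aeval r (Qp m i) := by
        rw [habs]
      have c2 : 2 * Complex.abs (Polynomial.aeval z (Qp m i).reverse)
            * Polynomial.aeval r (Qp m i)
          ≤ 2 * ((-1:ℝ)^i * Polynomial.aeval r (Qp m i).reverse
            * Complex.abs (Polynomial.aeval z (Qp m i))) := by
        nlinarith [hpsiz]
      have c3 : 2 * ((-1:ℝ)^i * Polynomial.aeval r (Qp m i).reverse)
          < r ^ M * (r - 1) * Polynomial.aeval r (Qp m i) := by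
        nlinarith [hur]
      have c4 : r ^ M * Complex.abs (z - 1)
            * (Complex.abs (Polynomial.aeval z (Qp m i)) * Polynomial.aeval r (Qp m i))
          < r ^ M * (r - 1)
            * (Complex.abs (Polynomial.aeval z (Qp m i)) * Polynomial.aeval r (Qp m i)) := by
        nlinarith [c1, c2, c3, hapos, hvr]
      have hposf : 0 < r ^ M
          * (Complex.abs (Polynomial.aeval z (Qp m i)) * Polynomial.aeval r (Qp m i)) :=
        mul_pos (pow_pos hr0 M) (mul_pos hapos hvr)
      nlinarith [c4, hzsub, hposf]
    · -- psi domination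
      intro z hz
      set r := Complex.abs z with hrdef
      have hr1 : 1 < r := lt_trans hμ'1 hz
      have hr0 : (0:ℝ) < r := lt_trans one_pos hr1
      have hrμ : μ < r := lt_of_le_of_lt hμμ' hz
      have hvr : 0 < Polynomial.aeval r (Qp m i) := hpos r hrμ
      have hur : 0 < Polynomial.aeval r (Qp m (i+1)) := hpos' r hz
      have hswr : 0 ≤ (-1:ℝ)^i * Polynomial.aeval r (Qp m i).reverse :=
        le_trans (abs_nonneg _) (hsign r hrμ)
      have hpsiz := hpsi z hrμ
      rw [← hrdef] at hpsiz
      have hzsub : r - 1 ≤ Complex.abs (z - 1) := by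
        have := abs_le_sub z 1
        rwa [map_one, ← hrdef] at this
      have hz1sub : r - 1 ≤ Complex.abs (1 - z) := by
        rwa [Complex.abs.map_sub] at hzsub
      have hzadd : Complex.abs (z + 1) ≤ r + 1 := by
        have := Complex.abs.add_le z 1
        rwa [map_one, ← hrdef] at this
      -- E2 : complex central identity bound
      have hcz := aeval_central m i z
      have hE2 : (r - 1) * Complex.abs (Polynomial.aeval z (Qp m (i+1)).reverse)
          ≤ 2 * r * Complex.abs (Polynomial.aeval z (Qp m (i+1)))
            + (r + 1)^2 * Complex.abs (Polynomial.aeval z (Qp m i).reverse) := by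
        have h1 : (r - 1) * Complex.abs (Polynomial.aeval z (Qp m (i+1)).reverse)
            ≤ Complex.abs ((1 - z) * Polynomial.aeval z (Qp m (i+1)).reverse) := by
          rw [map_mul]
          exact mul_le_mul_of_nonneg_right hz1sub (Complex.abs.nonneg _)
        have h2 : Complex.abs ((-1:ℂ)^i * 2 * z * Polynomial.aeval z (Qp m (i+1))
              + (z + 1)^2 * Polynomial.aeval z (Qp m i).reverse)
            ≤ 2 * r * Complex.abs (Polynomial.aeval z (Qp m (i+1)))
              + (r + 1)^2 * Complex.abs (Polynomial.aeval z (Qp m i).reverse) := by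
          refine (Complex.abs.add_le _ _).trans ?_
          have h3 : Complex.abs ((-1:ℂ)^i * 2 * z * Polynomial.aeval z (Qp m (i+1)))
              = 2 * r * Complex.abs (Polynomial.aeval z (Qp m (i+1))) := by
            simp only [map_mul, map_pow, Complex.abs.map_neg, map_one, Complex.abs_two,
              one_pow, one_mul, ← hrdef]
          have h4 : Complex.abs ((z + 1)^2 * Polynomial.aeval z (Qp m i).reverse)
              ≤ (r + 1)^2 * Complex.abs (Polynomial.aeval z (Qp m i).reverse) := by
            rw [map_mul, map_pow]
            have h5 : Complex.abs (z + 1) ^ 2 ≤ (r + 1)^2 := by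
              have := Complex.abs.nonneg (z + 1)
              nlinarith [hzadd]
            exact mul_le_mul_of_nonneg_right h5 (Complex.abs.nonneg _)
          linarith
        calc (r - 1) * Complex.abs (Polynomial.aeval z (Qp m (i+1)).reverse)
            ≤ Complex.abs ((1 - z) * Polynomial.aeval z (Qp m (i+1)).reverse) := h1
          _ = Complex.abs ((-1:ℂ)^i * 2 * z * Polynomial.aeval z (Qp m (i+1))
              + (z + 1)^2 * Polynomial.aeval z (Qp m i).reverse) := by rw [hcz]
          _ ≤ _ := h2
      -- E1 : real central identity
      have hcr := aeval_central m i (r : ℝ)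
      have hσ2 : ((-1:ℝ)^i) * ((-1:ℝ)^i) = 1 := by
        rw [← mul_pow]
        norm_num
      have hE1 : (r - 1) * ((-1:ℝ)^(i+1) * Polynomial.aeval r (Qp m (i+1)).reverse)
          = 2 * r * Polynomial.aeval r (Qp m (i+1))
            + (r + 1)^2 * ((-1:ℝ)^i * Polynomial.aeval r (Qp m i).reverse) := by
        rw [pow_succ]
        linear_combination ((-1:ℝ)^i) * hcr
          + (2 * r * Polynomial.aeval r (Qp m (i+1))) * hσ2
      -- E3
      have hurq := aeval_Qp_succ m i (r : ℝ)
      rw [← hM] at hurq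
      have hu_lb : r^M * (r - 1) * Complex.abs (Polynomial.aeval z (Qp m i))
            - 2 * Complex.abs (Polynomial.aeval z (Qp m i).reverse)
          ≤ Complex.abs (Polynomial.aeval z (Qp m (i+1))) := by
        have heu := aeval_Qp_succ m i z
        rw [← hM] at heu
        have h6 : Complex.abs (z^M * (z-1) * Polynomial.aeval z (Qp m i))
              - Complex.abs (-((-1:ℂ)^(i+1) * 2 * Polynomial.aeval z (Qp m i).reverse))
            ≤ Complex.abs (z^M * (z-1) * Polynomial.aeval z (Qp m i)
              - -((-1:ℂ)^(i+1) * 2 * Polynomial.aeval z (Qp m i).reverse)) :=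
          abs_le_sub _ _
        have h7 : Complex.abs (z^M * (z-1) * Polynomial.aeval z (Qp m i))
            = r^M * Complex.abs (z - 1) * Complex.abs (Polynomial.aeval z (Qp m i)) := by
          simp only [map_mul, map_pow, ← hrdef]
        have h8 : Complex.abs (-((-1:ℂ)^(i+1) * 2 * Polynomial.aeval z (Qp m i).reverse))
            = 2 * Complex.abs (Polynomial.aeval z (Qp m i).reverse) := by
          rw [Complex.abs.map_neg]
          simp only [map_mul, map_pow, Complex.abs.map_neg, map_one, Complex.abs_two,
            one_pow, one_mul]
        have h9 : z^M * (z-1) * Polynomial.aeval z (Qp m i)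
              - -((-1:ℂ)^(i+1) * 2 * Polynomial.aeval z (Qp m i).reverse)
            = Polynomial.aeval z (Qp m (i+1)) := by
          rw [heu]
          ring
        rw [h7, h8, h9] at h6
        have h10 : r^M * (r-1) * Complex.abs (Polynomial.aeval z (Qp m i))
            ≤ r^M * Complex.abs (z-1) * Complex.abs (Polynomial.aeval z (Qp m i)) :=
          mul_le_mul_of_nonneg_right
            (mul_le_mul_of_nonneg_left hzsub (pow_pos hr0 M).le)
            (Complex.abs.nonneg (Polynomial.aeval z (Qp m i)))
        linarith
      have hE3 : Complex.abs (Polynomial.aeval z (Qp m i).reverse)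
            * Polynomial.aeval r (Qp m (i+1))
          ≤ ((-1:ℝ)^i * Polynomial.aeval r (Qp m i).reverse)
            * Complex.abs (Polynomial.aeval z (Qp m (i+1))) := by
        have hureq : Polynomial.aeval r (Qp m (i+1))
            = r^M * (r - 1) * Polynomial.aeval r (Qp m i)
              - 2 * ((-1:ℝ)^i * Polynomial.aeval r (Qp m i).reverse) := by
          rw [hurq, pow_succ]
          ring
        have hfac : (0:ℝ) ≤ r^M * (r - 1) :=
          mul_nonneg (pow_pos hr0 M).le (by linarith)
        have step1 : Complex.abs (Polynomial.aeval z (Qp m i).reverse)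
              * Polynomial.aeval r (Qp m (i+1))
            ≤ ((-1:ℝ)^i * Polynomial.aeval r (Qp m i).reverse)
              * (r^M * (r - 1) * Complex.abs (Polynomial.aeval z (Qp m i))
                - 2 * Complex.abs (Polynomial.aeval z (Qp m i).reverse)) := by
          rw [hureq]
          nlinarith [mul_le_mul_of_nonneg_left hpsiz hfac]
        refine step1.trans ?_
        exact mul_le_mul_of_nonneg_left hu_lb hswr
      -- combine
      have hfinal : (r - 1) * (Complex.abs (Polynomial.aeval z (Qp m (i+1)).reverse)
            * Polynomial.aeval r (Qp m (i+1)))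
          ≤ (r - 1) * (((-1:ℝ)^(i+1) * Polynomial.aeval r (Qp m (i+1)).reverse)
            * Complex.abs (Polynomial.aeval z (Qp m (i+1)))) := by
        calc (r - 1) * (Complex.abs (Polynomial.aeval z (Qp m (i+1)).reverse)
              * Polynomial.aeval r (Qp m (i+1)))
            = ((r - 1) * Complex.abs (Polynomial.aeval z (Qp m (i+1)).reverse))
              * Polynomial.aeval r (Qp m (i+1)) := by ring
          _ ≤ (2 * r * Complex.abs (Polynomial.aeval z (Qp m (i+1)))
              + (r + 1)^2 * Complex.abs (Polynomial.aeval z (Qp m i).reverse))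
              * Polynomial.aeval r (Qp m (i+1)) :=
            mul_le_mul_of_nonneg_right hE2 hur.le
          _ = 2 * r * Polynomial.aeval r (Qp m (i+1))
                * Complex.abs (Polynomial.aeval z (Qp m (i+1)))
              + (r + 1)^2 * (Complex.abs (Polynomial.aeval z (Qp m i).reverse)
                * Polynomial.aeval r (Qp m (i+1))) := by ring
          _ ≤ 2 * r * Polynomial.aeval r (Qp m (i+1))
                * Complex.abs (Polynomial.aeval z (Qp m (i+1)))
              + (r + 1)^2 * (((-1:ℝ)^i * Polynomial.aeval r (Qp m i).reverse)
                * Complex.abs (Polynomial.aeval z (Qp m (i+1)))) := by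
            have := mul_le_mul_of_nonneg_left hE3 (by positivity : (0:ℝ) ≤ (r+1)^2)
            linarith
          _ = (2 * r * Polynomial.aeval r (Qp m (i+1))
              + (r + 1)^2 * ((-1:ℝ)^i * Polynomial.aeval r (Qp m i).reverse))
              * Complex.abs (Polynomial.aeval z (Qp m (i+1))) := by ring
          _ = ((r - 1) * ((-1:ℝ)^(i+1) * Polynomial.aeval r (Qp m (i+1)).reverse))
              * Complex.abs (Polynomial.aeval z (Qp m (i+1))) := by rw [hE1]
          _ = _ := by ring
      have hrpos : (0:ℝ) < r - 1 := by linarith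
      have := le_of_mul_le_mul_left hfinal hrpos
      calc Complex.abs (Polynomial.aeval z (Qp m (i+1)).reverse)
            * Polynomial.aeval r (Qp m (i+1))
          ≤ ((-1:ℝ)^(i+1) * Polynomial.aeval r (Qp m (i+1)).reverse)
            * Complex.abs (Polynomial.aeval z (Qp m (i+1))) := this
        _ = (-1:ℝ)^(i+1) * Polynomial.aeval r (Qp m (i+1)).reverse
            * Complex.abs (Polynomial.aeval z (Qp m (i+1))) := by ring

end KTanal


namespace KTfinal
open KTaux KTaux2 KTanal

lemma Rpoly_eq (m : ℕ → ℕ) : ∀ i : ℕ, Rpoly m (i+1) = X * Qp m (i+1) := by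
  intro i
  induction i with
  | zero =>
    have h2 : (1 : ℤ[X]).reverse = 1 := by
      rw [← Polynomial.C_1, Polynomial.reverse_C]
    show Rpoly m 1 = X * Qp m 1
    rw [Rpoly, Qp]
    rw [show Qp m 0 = 1 from rfl, h2, pow_succ]
    ring
  | succ i ih =>
    show Rpoly m (i+2) = X * Qp m (i+2)
    conv_rhs => rw [Qp]
    rw [Rpoly, ih, Polynomial.reverse_X_mul]
    ring

theorem main (k : ℕ) (hk : 1 ≤ k) (m : ℕ → ℕ) :
    (∃ μ : ℝ, 1 < μ ∧ Polynomial.aeval (μ : ℂ) (Rpoly m k) = 0 ∧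
      (∀ z : ℂ, Polynomial.aeval z (Rpoly m k) = 0 → Complex.abs z ≤ μ) ∧
      maxRootAbs (Rpoly m k) = μ) ∧
    1 < maxRootAbs (Rpoly m k) := by
  obtain ⟨j, rfl⟩ : ∃ j, k = j + 1 := ⟨k - 1, by omega⟩
  obtain ⟨μ, hμ1, _, hroot, hpos, hdom, hpsi⟩ := KTanal.inv m (j+1)
  obtain ⟨hμgt, hμroot⟩ := hroot (Nat.succ_ne_zero j)
  have hR : Rpoly m (j+1) = X * Qp m (j+1) := Rpoly_eq m j
  have rootC : Polynomial.aeval (μ : ℂ) (Rpoly m (j+1)) = 0 := by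
    rw [hR, map_mul, Polynomial.aeval_X, KTanal.aeval_ofReal, hμroot]
    simp
  have hub : ∀ z : ℂ, Polynomial.aeval z (Rpoly m (j+1)) = 0 → Complex.abs z ≤ μ := by
    intro z hz
    rw [hR, map_mul, Polynomial.aeval_X] at hz
    rcases mul_eq_zero.mp hz with h | h
    · rw [h, map_zero]
      linarith
    · by_contra hc
      push_neg at hc
      exact hdom z hc h
  have hmax : maxRootAbs (Rpoly m (j+1)) = μ := by
    apply IsGreatest.csSup_eq
    constructor
    · exact ⟨(μ : ℂ), rootC, by show ‖(μ : ℂ)‖ = μ; rw [Complex.norm_real, Real.norm_eq_abs, abs_of_pos (by linarith)]⟩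
    · rintro y ⟨z, hz, rfl⟩
      exact hub z hz
  exact ⟨⟨μ, hμgt, rootC, hub, hmax⟩, by rw [hmax]; exact hμgt⟩

end KTfinal


/-- The polynomial `R_{(m_1,…,m_k)}` has a real root `μ > 1` dominating all its
complex roots in absolute value; in particular `λ(R_{(m_1,…,m_k)}) > 1`. -/
theorem Rpoly_has_large_root (k : ℕ) (hk : 1 ≤ k) (m : ℕ → ℕ)
    (hm : ∀ j, 1 ≤ j → j ≤ k → 1 ≤ m j) :
    (∃ μ : ℝ, 1 < μ ∧ Polynomial.aeval (μ : ℂ) (Rpoly m k) = 0 ∧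
      (∀ z : ℂ, Polynomial.aeval z (Rpoly m k) = 0 → ‖z‖ ≤ μ) ∧
      maxRootAbs (Rpoly m k) = μ) ∧
    1 < maxRootAbs (Rpoly m k) := by
  exact KTfinal.main k hk m
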